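/- For natural numbers n ≥ 1 and k ≥ 2, the sum S_n(k) = Σ_{j=2}^{k} (-1)^(n+j) / ((k-j)!·(n+j)!) equals (-1)^n / ((n+1)!·(k-2)!·(n+k)). -/

import Mathlib

lemma alt_choose (N m : ℕ) :
    ∑ i ∈ Finset.range (m+1), (-1:ℚ)^i * ((N+1).choose i : ℚ) = (-1)^m * (N.choose m : ℚ) := by
  induction m with
  | zero => simp
  | succ m ih =>
    rw [Finset.sum_range_succ, ih, Nat.choose_succ_succ]
    push_cast
    ring

theorem S_n_k (n k : ℕ) (hn : 1 ≤ n) (hk : 2 ≤ k) :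
    (∑ j ∈ Finset.Icc 2 k, (-1 : ℚ) ^ (n + j) / (((k - j).factorial : ℚ) * ((n + j).factorial : ℚ)))
      = (-1 : ℚ) ^ n / (((n + 1).factorial : ℚ) * ((k - 2).factorial : ℚ) * ((n : ℚ) + k)) := by
  obtain ⟨m, rfl⟩ : ∃ m, k = m + 2 := ⟨k - 2, by omega⟩
  rw [← Finset.Ico_add_one_right_eq_Icc, Finset.sum_Ico_eq_sum_range]
  have hrange : m + 2 + 1 - 2 = m + 1 := by omega
  rw [hrange, ← Finset.sum_range_reflect]
  have key : ∀ i ∈ Finset.range (m+1),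
      (-1:ℚ)^(n + (2 + (m + 1 - 1 - i))) /
        (((m + 2 - (2 + (m + 1 - 1 - i))).factorial : ℚ) * ((n + (2 + (m + 1 - 1 - i))).factorial : ℚ))
      = (-1:ℚ)^(n+m) * ((-1:ℚ)^i * ((n+m+2).choose i : ℚ)) / ((n+m+2).factorial : ℚ) := by
    intro i hi
    rw [Finset.mem_range] at hi
    have hi' : i ≤ m := by omega
    have h1 : m + 2 - (2 + (m + 1 - 1 - i)) = i := by omega
    have h2 : n + (2 + (m + 1 - 1 - i)) = n + m + 2 - i := by omega
    rw [h1, h2]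
    have hle : i ≤ n + m + 2 := by omega
    have hfact := Nat.choose_mul_factorial_mul_factorial hle
    have hfQ : ((n+m+2).choose i : ℚ) * (i.factorial : ℚ) * ((n+m+2-i).factorial : ℚ)
        = ((n+m+2).factorial : ℚ) := by exact_mod_cast congrArg (Nat.cast : ℕ → ℚ) hfact
    have hsign : (-1:ℚ)^(n + m + 2 - i) * (-1)^i = (-1)^(n+m) := by
      rw [← pow_add]
      have : n + m + 2 - i + i = n + m + 2 := by omega
      rw [this]
      rw [pow_add]
      norm_num
    have f1 : (i.factorial : ℚ) ≠ 0 := by positivity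
    have f2 : ((n+m+2-i).factorial : ℚ) ≠ 0 := by positivity
    have f3 : ((n+m+2).factorial : ℚ) ≠ 0 := by positivity
    field_simp
    rw [← hfQ]
    rw [← hsign]
    ring_nf
    simp [pow_mul', neg_one_sq]
  rw [Finset.sum_congr rfl key]
  rw [← Finset.sum_div, ← Finset.mul_sum]
  have := alt_choose (n+m+1) m
  rw [show n+m+1+1 = n+m+2 from rfl] at this
  rw [this]
  -- now pure arithmetic with factorials
  have hch := Nat.choose_mul_factorial_mul_factorial (show m ≤ n+m+1 by omega)
  have h3 : n + m + 1 - m = n + 1 := by omega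
  rw [h3] at hch
  have hchQ : ((n+m+1).choose m : ℚ) * (m.factorial : ℚ) * ((n+1).factorial : ℚ)
      = ((n+m+1).factorial : ℚ) := by exact_mod_cast congrArg (Nat.cast : ℕ → ℚ) hch
  have hfs : ((n+m+2).factorial : ℚ) = ((n:ℚ)+m+2) * ((n+m+1).factorial : ℚ) := by
    rw [show n+m+2 = (n+m+1)+1 from rfl, Nat.factorial_succ]
    push_cast; ring
  have h4 : m + 2 - 2 = m := by omega
  rw [h4]
  have f1 : (m.factorial : ℚ) ≠ 0 := by positivity
  have f2 : ((n+1).factorial : ℚ) ≠ 0 := by positivity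
  have f3 : ((n+m+1).factorial : ℚ) ≠ 0 := by positivity
  have f4 : ((n:ℚ)+m+2) ≠ 0 := by positivity
  have hk2 : ((n:ℚ) + (m+2:ℕ)) = (n:ℚ)+m+2 := by push_cast; ring
  rw [hk2, hfs]
  have hsign2 : (-1:ℚ)^(n+m) * (-1:ℚ)^m = (-1)^n := by
    rw [← pow_add, show n+m+m = n + 2*m by ring, pow_add, pow_mul]
    norm_num
  field_simp
  rw [← hchQ]
  rw [← hsign2]
  ring_nf
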